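/- Let Φ be the standard normal CDF. The function y ↦ 1 − Φ(y) − yΦ'(y) has a unique zero y* on (0, ∞); moreover it is strictly positive on (0, y*) and strictly negative on (y*, ∞). -/

import Mathlib

open Real MeasureTheory Filter Set

noncomputable def stdPhi (x : ℝ) : ℝ := ∫ t in Set.Iic x, Real.exp (-t^2/2) / Real.sqrt (2*Real.pi)
noncomputable def stdPhi' (x : ℝ) : ℝ := Real.exp (-x^2/2) / Real.sqrt (2*Real.pi)

lemma phi_pos (x : ℝ) : 0 < stdPhi' x := by
  unfold stdPhi'
  positivity

lemma phi_cont : Continuous stdPhi' := by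
  unfold stdPhi'
  fun_prop

lemma phi_integrable : Integrable stdPhi' := by
  unfold stdPhi'
  have h : Integrable (fun x : ℝ => Real.exp (-(1/2) * x^2)) := integrable_exp_neg_mul_sq (by norm_num)
  have := h.div_const (Real.sqrt (2*Real.pi))
  convert this using 2 with x
  ring_nf

lemma phi_integral : ∫ x, stdPhi' x = 1 := by
  unfold stdPhi'
  rw [integral_div]
  have h : ∫ x : ℝ, Real.exp (-(1/2) * x^2) = Real.sqrt (Real.pi / (1/2)) := integral_gaussian (1/2)
  have h2 : (fun x : ℝ => Real.exp (-x^2/2)) = fun x : ℝ => Real.exp (-(1/2) * x^2) := by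
    funext x; ring_nf
  rw [h2, h]
  rw [div_eq_one_iff_eq (by positivity)]
  norm_num
  ring_nf

lemma stdPhi_tendsto : Tendsto stdPhi atTop (nhds 1) := by
  have h := tendsto_setIntegral_of_monotone (μ := volume) (f := stdPhi')
    (s := fun x : ℝ => Set.Iic x) (fun i => measurableSet_Iic)
    (fun a b hab => Iic_subset_Iic.mpr hab) (by rw [iUnion_Iic]; exact phi_integrable.integrableOn)
  rw [iUnion_Iic, MeasureTheory.setIntegral_univ, phi_integral] at h
  exact h



lemma stdPhi_eq (y : ℝ) : stdPhi y = stdPhi 0 + ∫ t in (0:ℝ)..y, stdPhi' t := by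
  have h := intervalIntegral.integral_Iic_sub_Iic (f := stdPhi') (μ := volume) (a := 0) (b := y)
    phi_integrable.integrableOn phi_integrable.integrableOn
  unfold stdPhi stdPhi' at *
  linarith

lemma stdPhi_hasDerivAt (x : ℝ) : HasDerivAt stdPhi (stdPhi' x) x := by
  have h : HasDerivAt (fun u => ∫ t in (0:ℝ)..u, stdPhi' t) (stdPhi' x) x :=
    intervalIntegral.integral_hasDerivAt_right
      (phi_integrable.intervalIntegrable)
      (phi_cont.aestronglyMeasurable.stronglyMeasurableAtFilter)
      phi_cont.continuousAt
  have := (hasDerivAt_const x (stdPhi 0)).add h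
  simpa [← stdPhi_eq, Pi.add_def] using this

lemma stdPhi_cont : Continuous stdPhi :=
  continuous_iff_continuousAt.mpr fun x => (stdPhi_hasDerivAt x).continuousAt

lemma phi'_hasDerivAt (x : ℝ) : HasDerivAt stdPhi' (-x * stdPhi' x) x := by
  unfold stdPhi'
  have h1 : HasDerivAt (fun y : ℝ => -y^2/2) (-x) x := by
    have := ((hasDerivAt_pow 2 x).neg).div_const 2
    refine this.congr_deriv ?_
    simp; ring
  have := (h1.exp).div_const (Real.sqrt (2*Real.pi))
  refine this.congr_deriv ?_
  ring

noncomputable def ff (y : ℝ) : ℝ := 1 - stdPhi y - y * stdPhi' y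

lemma ff_hasDerivAt (x : ℝ) : HasDerivAt ff ((x^2 - 2) * stdPhi' x) x := by
  have h2 := (hasDerivAt_id x).mul (phi'_hasDerivAt x)
  have h := ((hasDerivAt_const x (1:ℝ)).sub (stdPhi_hasDerivAt x)).sub h2
  refine h.congr_deriv ?_
  simp only [id_eq]
  ring

lemma ff_cont : Continuous ff :=
  ((continuous_const.sub stdPhi_cont).sub (continuous_id.mul phi_cont))

lemma ff_tendsto : Tendsto ff atTop (nhds 0) := by
  have h1 : Tendsto (fun y : ℝ => y * stdPhi' y) atTop (nhds 0) := by
    have hb : Tendsto (fun y : ℝ => Real.exp (y - y^2/2)) atTop (nhds 0) := by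
      apply Real.tendsto_exp_atBot.comp
      have h : Tendsto (fun y : ℝ => y * (y/2 - 1)) atTop atTop := by
        apply Tendsto.atTop_mul_atTop₀ tendsto_id
        apply tendsto_atTop_add_const_right
        exact tendsto_id.atTop_div_const (by norm_num)
      have := tendsto_neg_atTop_atBot.comp h
      convert this using 2 with y
      simp [Function.comp]; ring
    have hsq : Tendsto (fun y : ℝ => y * Real.exp (-y^2/2)) atTop (nhds 0) := by
      apply squeeze_zero' (Filter.eventually_atTop.mpr ⟨0, fun y hy => by positivity⟩)
        (Filter.eventually_atTop.mpr ⟨0, fun y hy => ?_⟩) hb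
      calc y * Real.exp (-y^2/2) ≤ Real.exp y * Real.exp (-y^2/2) :=
            mul_le_mul_of_nonneg_right (Real.add_one_le_exp y |>.trans' (by linarith)) (Real.exp_pos _).le
        _ = Real.exp (y - y^2/2) := by rw [← Real.exp_add]; ring_nf
    have := hsq.div_const (Real.sqrt (2*Real.pi))
    simp only [zero_div] at this
    convert this using 2 with y
    unfold stdPhi'
    ring
  have h2 : Tendsto (fun y => 1 - stdPhi y) atTop (nhds 0) := by
    have := tendsto_const_nhds (x := (1:ℝ)) (f := atTop (α := ℝ)) |>.sub stdPhi_tendsto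
    simpa using this
  have := h2.sub h1
  simp at this; exact this

lemma sqrt2_pos : (0:ℝ) < Real.sqrt 2 := Real.sqrt_pos.mpr (by norm_num)

lemma ff_anti : StrictAntiOn ff (Icc 0 (Real.sqrt 2)) := by
  apply strictAntiOn_of_deriv_neg (convex_Icc _ _) ff_cont.continuousOn
  intro x hx
  rw [interior_Icc] at hx
  rw [(ff_hasDerivAt x).deriv]
  have hx2 : x^2 < 2 := by
    have := sq_lt_sq' (by linarith [hx.1, sqrt2_pos] : -Real.sqrt 2 < x) hx.2
    simpa [Real.sq_sqrt (by norm_num : (2:ℝ) ≥ 0)] using this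
  have := phi_pos x
  nlinarith


lemma ff_mono : StrictMonoOn ff (Ici (Real.sqrt 2)) := by
  apply strictMonoOn_of_deriv_pos (convex_Ici _) ff_cont.continuousOn
  intro x hx
  rw [interior_Ici] at hx
  have hx' : Real.sqrt 2 < x := hx
  rw [(ff_hasDerivAt x).deriv]
  have h := Real.sq_sqrt (by norm_num : (0:ℝ) ≤ 2)
  have hx2 : 2 < x^2 := by nlinarith [sqrt2_pos, mul_lt_mul_of_pos_left hx' sqrt2_pos, mul_lt_mul_of_pos_right hx' (sqrt2_pos.trans hx')]
  exact mul_pos (by linarith) (phi_pos x)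

lemma ff_neg_of_ge (y : ℝ) (hy : Real.sqrt 2 ≤ y) : ff y < 0 := by
  have h1 : ff y < ff (y + 1) := ff_mono hy (mem_Ici.mpr (by linarith)) (lt_add_one y)
  have h2 : ff (y + 1) ≤ 0 := by
    apply ge_of_tendsto ff_tendsto
    refine Filter.eventually_atTop.mpr ⟨y + 1, fun z hz => ?_⟩
    exact ff_mono.monotoneOn (mem_Ici.mpr (by linarith)) (mem_Ici.mpr (by linarith)) hz
  linarith

lemma stdPhi_mono : StrictMono stdPhi :=
  strictMono_of_deriv_pos fun x => (stdPhi_hasDerivAt x).deriv ▸ phi_pos x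

lemma ff_zero_pos : 0 < ff 0 := by
  have h1 : stdPhi 0 < stdPhi 1 := stdPhi_mono (by norm_num)
  have h2 : stdPhi 1 ≤ 1 := by
    apply ge_of_tendsto stdPhi_tendsto
    exact Filter.eventually_atTop.mpr ⟨1, fun z hz => (stdPhi_mono.monotone hz)⟩
  unfold ff
  simp only [zero_mul]
  linarith

/-- The function `y ↦ 1 − Φ(y) − yΦ'(y)` has a unique zero `y*` on `(0,∞)`;
it is strictly positive on `(0, y*)` and strictly negative on `(y*, ∞)`. -/
theorem unique_zero_exchange_foc :
    ∃ ystar : ℝ, 0 < ystar ∧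
      (1 - stdPhi ystar - ystar * stdPhi' ystar = 0) ∧
      (∀ y : ℝ, 0 < y → 1 - stdPhi y - y * stdPhi' y = 0 → y = ystar) ∧
      (∀ y : ℝ, 0 < y → y < ystar → 0 < 1 - stdPhi y - y * stdPhi' y) ∧
      (∀ y : ℝ, ystar < y → 1 - stdPhi y - y * stdPhi' y < 0) := by
  have hs2 := sqrt2_pos
  have hfneg : ff (Real.sqrt 2) < 0 := ff_neg_of_ge _ le_rfl
  have hivt := intermediate_value_Icc' (le_of_lt hs2) ff_cont.continuousOn
  have h0mem : (0:ℝ) ∈ Icc (ff (Real.sqrt 2)) (ff 0) := ⟨hfneg.le, ff_zero_pos.le⟩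
  obtain ⟨ystar, hymem, hyeq⟩ := hivt h0mem
  have hy0 : 0 < ystar := by
    rcases lt_or_eq_of_le hymem.1 with h | h
    · exact h
    · exfalso; rw [← h] at hyeq; linarith [ff_zero_pos]
  have hys2 : ystar < Real.sqrt 2 := by
    rcases lt_or_eq_of_le hymem.2 with h | h
    · exact h
    · exfalso; rw [h] at hyeq; linarith
  have hpos : ∀ y : ℝ, 0 < y → y < ystar → 0 < ff y := by
    intro y hy hylt
    have := ff_anti ⟨hy.le, by linarith⟩ ⟨hy0.le, hys2.le⟩ hylt
    rw [hyeq] at this; exact this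
  have hneg : ∀ y : ℝ, ystar < y → ff y < 0 := by
    intro y hylt
    rcases le_or_gt y (Real.sqrt 2) with h | h
    · have := ff_anti ⟨hy0.le, hys2.le⟩ ⟨by linarith, h⟩ hylt
      rw [hyeq] at this; exact this
    · exact ff_neg_of_ge y h.le
  refine ⟨ystar, hy0, hyeq, ?_, hpos, hneg⟩
  intro y hy hfy
  rcases lt_trichotomy y ystar with h | h | h
  · exact absurd (hpos y hy h) (by rw [show (1 - stdPhi y - y * stdPhi' y) = ff y from rfl] at hfy; simp [hfy])
  · exact h
  · exact absurd (hneg y h) (by rw [show (1 - stdPhi y - y * stdPhi' y) = ff y from rfl] at hfy; simp [hfy])
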